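/- Let i ≥ 1 and suppose χ_i := q11^{i²}·q12^i·q21^i·q22 satisfies χ_i = −1. Then for every m ≥ 1, ((D₁^{i+1} ∘ D₂) ∘ (D₁^{i-1} ∘ D₂))(z_i^{2m}) = m·c_i·c_{i+1}·z_i^{2(m-1)}, where c_j := q21^{-j}·b_j·[j]!_{q11^{-1}}. (Consequently, if k has characteristic zero and c_i·c_{i+1} ≠ 0 then no even power of z_i lies in the common kernel of all iterated compositions of D₁ and D₂, which is the key step in condition (A5) of the classification.) -/

import Mathlib

noncomputable section

variable {k : Type*} [Field k]

/-- The algebra endomorphism of the free algebra on two generators with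
`x1 ↦ a • x1`, `x2 ↦ b • x2`. -/
def alph (a b : k) : FreeAlgebra k (Fin 2) →ₐ[k] FreeAlgebra k (Fin 2) :=
  FreeAlgebra.lift k ![a • FreeAlgebra.ι k 0, b • FreeAlgebra.ι k 1]

/-- The elements `z_i`, defined by `z_0 = x2`, `z_{i+1} = x1·z_i − q11^i·q12·z_i·x1`. -/
def zz (q11 q12 : k) : ℕ → FreeAlgebra k (Fin 2)
  | 0 => FreeAlgebra.ι k 1
  | (i + 1) => FreeAlgebra.ι k 0 * zz q11 q12 i
      - (q11 ^ i * q12) • (zz q11 q12 i * FreeAlgebra.ι k 0)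

/-- The elements `u_i`, defined by `u_0 = x1`, `u_{i+1} = u_i·x2 − q12·q22^i·x2·u_i`. -/
def uu (q12 q22 : k) : ℕ → FreeAlgebra k (Fin 2)
  | 0 => FreeAlgebra.ι k 0
  | (i + 1) => uu q12 q22 i * FreeAlgebra.ι k 1
      - (q12 * q22 ^ i) • (FreeAlgebra.ι k 1 * uu q12 q22 i)

/-- The q-number `[m]_p = 1 + p + ⋯ + p^{m-1}`. -/
def qnum (p : k) (m : ℕ) : k := ∑ j ∈ Finset.range m, p ^ j

/-- The q-factorial `[m]!_p = [1]_p·[2]_p⋯[m]_p`. -/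
def qfact (p : k) (m : ℕ) : k := ∏ l ∈ Finset.range m, qnum p (l + 1)

/-- `b_i = ∏_{j=0}^{i-1} (1 − q11^j·q12·q21)`. -/
def bb (q11 q12 q21 : k) (i : ℕ) : k :=
  ∏ j ∈ Finset.range i, (1 - q11 ^ j * q12 * q21)

/-- `c_i = q21^{-i}·b_i·[i]!_{q11⁻¹}`. -/
def cc (q11 q12 q21 : k) (i : ℕ) : k :=
  q21⁻¹ ^ i * bb q11 q12 q21 i * qfact q11⁻¹ i

/-- `d_{i,0}`. -/
def dd (q11 q12 q21 q22 : k) (i : ℕ) : k :=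
  q21⁻¹ * (1 - q11 ^ i * q12 * q21) * qnum q11⁻¹ (i + 1)
    + (q11 ^ (i * (i + 1)) * q12 ^ i * q21 ^ (i + 1) * q22)⁻¹
    - q11 ^ (i * (i + 1)) * q12 ^ (i + 1) * q21 ^ i * q22






lemma alph_x1 (a b : k) : alph a b (FreeAlgebra.ι k 0) = a • FreeAlgebra.ι k 0 := by
  simp [alph]

lemma alph_x2 (a b : k) : alph a b (FreeAlgebra.ι k 1) = b • FreeAlgebra.ι k 1 := by
  simp [alph]

lemma alph_zz (a b q11 q12 : k) : ∀ j, alph a b (zz q11 q12 j) = (a ^ j * b) • zz q11 q12 j := by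
  intro j
  induction j with
  | zero => simp [zz, alph_x2]
  | succ j ih =>
    simp only [zz, map_sub, map_mul, map_smul, ih, alph_x1]
    rw [smul_mul_assoc, mul_smul_comm, smul_mul_assoc, mul_smul_comm, smul_smul, smul_smul,
      smul_smul, smul_sub, smul_smul]
    ring_nf

lemma qnum_zero (p : k) : qnum p 0 = 0 := by simp [qnum]
lemma qnum_one (p : k) : qnum p 1 = 1 := by simp [qnum]
lemma qnum_succ (p : k) (n : ℕ) : qnum p (n + 1) = qnum p n + p ^ n := Finset.sum_range_succ _ _
lemma qnum_succ' (p : k) (n : ℕ) : qnum p (n + 1) = 1 + p * qnum p n := by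
  rw [qnum, Finset.sum_range_succ', qnum, Finset.mul_sum]
  simp [pow_succ, add_comm, mul_comm]

lemma qnum_add (p : k) (j e : ℕ) : qnum p (j + e) = qnum p j + p ^ j * qnum p e := by
  induction e with
  | zero => simp [qnum_zero]
  | succ e ih =>
    rw [← Nat.add_assoc, qnum_succ, ih, qnum_succ, mul_add, pow_add]
    ring

lemma qfact_succ (p : k) (n : ℕ) : qfact p (n + 1) = qfact p n * qnum p (n + 1) :=
  Finset.prod_range_succ _ _

lemma bb_succ (q11 q12 q21 : k) (j : ℕ) :
    bb q11 q12 q21 (j + 1) = bb q11 q12 q21 j * (1 - q11 ^ j * q12 * q21) :=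
  Finset.prod_range_succ _ _


section DGeneric
variable (a b : k) (D : FreeAlgebra k (Fin 2) →ₗ[k] FreeAlgebra k (Fin 2))
  (hmul : ∀ u v : FreeAlgebra k (Fin 2), D (u * v) = D u * v + alph a b u * D v)
include hmul

lemma D_one' : D 1 = 0 := by
  have h := hmul 1 1
  simp only [mul_one, map_one, one_mul] at h
  have h2 : D 1 + 0 = D 1 + D 1 := by simpa using h.symm
  exact (add_left_cancel h2).symm

lemma D_pow_zero (w : FreeAlgebra k (Fin 2)) (hw : D w = 0) (n : ℕ) : D (w ^ n) = 0 := by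
  induction n with
  | zero => simpa using D_one' a b D hmul
  | succ n ih => rw [pow_succ, hmul, ih, hw]; simp

lemma D_zpow_mul (w v : FreeAlgebra k (Fin 2)) (hw : D w = 0) (e : k)
    (he : alph a b w = e • w) (n : ℕ) :
    D (w ^ n * v) = e ^ n • (w ^ n * D v) := by
  induction n with
  | zero => simp
  | succ n ih =>
    rw [pow_succ', mul_assoc, hmul, hw, he, ih, zero_mul, zero_add, smul_mul_assoc,
      mul_smul_comm, smul_smul, pow_succ', ← mul_assoc]

lemma D_x1pow_mul (hx1 : D (FreeAlgebra.ι k 0) = 1) (v : FreeAlgebra k (Fin 2)) (n : ℕ) :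
    D (FreeAlgebra.ι k 0 ^ n * v)
      = qnum a n • (FreeAlgebra.ι k 0 ^ (n - 1) * v)
        + a ^ n • (FreeAlgebra.ι k 0 ^ n * D v) := by
  induction n with
  | zero => simp [qnum_zero]
  | succ n ih =>
    rw [pow_succ', mul_assoc, hmul, hx1, ih, alph_x1, one_mul]
    rw [mul_add, mul_smul_comm, mul_smul_comm, smul_mul_assoc, smul_mul_assoc, smul_smul, smul_smul]
    rcases n with _ | m
    · simp [qnum_zero, qnum_succ']
    · rw [Nat.add_sub_cancel, Nat.add_sub_cancel, ← mul_assoc, ← pow_succ', ← mul_assoc, ← pow_succ']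
      rw [qnum_succ' a (m+1), add_smul, one_smul, mul_comm a (qnum a (m+1)), pow_succ]
      module

end DGeneric

-- D1 kills all z_j
lemma D1_zz (q11 q12 : k) (hq11 : q11 ≠ 0) (hq12 : q12 ≠ 0)
    (D1 : FreeAlgebra k (Fin 2) →ₗ[k] FreeAlgebra k (Fin 2))
    (hD1x1 : D1 (FreeAlgebra.ι k 0) = 1)
    (hD1x2 : D1 (FreeAlgebra.ι k 1) = 0)
    (hD1mul : ∀ a b : FreeAlgebra k (Fin 2),
      D1 (a * b) = D1 a * b + alph q11⁻¹ q12⁻¹ a * D1 b) :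
    ∀ j, D1 (zz q11 q12 j) = 0 := by
  intro j
  induction j with
  | zero => exact hD1x2
  | succ j ih =>
    show D1 (FreeAlgebra.ι k 0 * zz q11 q12 j
      - (q11 ^ j * q12) • (zz q11 q12 j * FreeAlgebra.ι k 0)) = 0
    rw [map_sub, map_smul, hD1mul, hD1mul, ih, alph_zz, alph_x1, hD1x1]
    rw [one_mul, zero_mul, zero_add, smul_mul_assoc, mul_one, smul_smul]
    have : q11 ^ j * q12 * ((q11⁻¹) ^ j * q12⁻¹) = 1 := by
      field_simp
      rw [← mul_pow, mul_one_div_cancel hq11, one_pow]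
    rw [this, one_smul]
    simp
-- D2 of z_j
lemma D2_zz (q11 q12 q21 q22 : k) (hq21 : q21 ≠ 0)
    (D2 : FreeAlgebra k (Fin 2) →ₗ[k] FreeAlgebra k (Fin 2))
    (hD2x1 : D2 (FreeAlgebra.ι k 0) = 0)
    (hD2x2 : D2 (FreeAlgebra.ι k 1) = 1)
    (hD2mul : ∀ a b : FreeAlgebra k (Fin 2),
      D2 (a * b) = D2 a * b + alph q21⁻¹ q22⁻¹ a * D2 b) :
    ∀ j, D2 (zz q11 q12 j)
      = ((q21⁻¹) ^ j * bb q11 q12 q21 j) • (FreeAlgebra.ι k 0) ^ j := by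
  intro j
  induction j with
  | zero => simpa [bb, zz] using hD2x2
  | succ j ih =>
    show D2 (FreeAlgebra.ι k 0 * zz q11 q12 j
      - (q11 ^ j * q12) • (zz q11 q12 j * FreeAlgebra.ι k 0)) = _
    rw [map_sub, map_smul, hD2mul, hD2mul, ih, alph_zz, alph_x1, hD2x1]
    simp only [zero_mul, zero_add, mul_zero, add_zero, smul_mul_assoc, mul_smul_comm,
      smul_smul, ← pow_succ', ← pow_succ]
    rw [← sub_smul]
    congr 1
    rw [bb_succ]
    field_simp
    linear_combination (-(q21⁻¹ ^ j * bb q11 q12 q21 j) + q21 * (q21⁻¹ ^ j * bb q11 q12 q21 j) * q11 ^ j * q12) * mul_inv_cancel₀ hq21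
-- parity sums
lemma sum_parity_one (m : ℕ) :
    ∑ t ∈ Finset.range (2 * m), (if Even t then (0:k) else 1) = m := by
  induction m with
  | zero => simp
  | succ m ih =>
    rw [show 2 * (m+1) = (2*m) + 1 + 1 by ring, Finset.sum_range_succ, Finset.sum_range_succ, ih]
    have h1 : Even (2*m) := even_two_mul m
    have h2 : ¬ Even (2*m+1) := by simp [Nat.even_add_one, h1]
    simp [h1, h2]
lemma sum_parity_neg (m : ℕ) :
    ∑ t ∈ Finset.range (2 * m), ((-1:k) ^ t * (if Even t then 0 else 1)) = -(m:k) := by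
  induction m with
  | zero => simp
  | succ m ih =>
    rw [show 2 * (m+1) = (2*m) + 1 + 1 by ring, Finset.sum_range_succ, Finset.sum_range_succ, ih]
    have h1 : Even (2*m) := even_two_mul m
    have h2 : ¬ Even (2*m+1) := by simp [Nat.even_add_one, h1]
    have h3 : Odd (2*m+1) := Nat.odd_iff.mpr (by omega)
    rw [if_pos h1, if_neg h2, h3.neg_one_pow]
    push_cast; ring
lemma sum_parity_refl (m : ℕ) :
    ∑ t ∈ Finset.range (2 * m), (if Even (2*m - 1 - t) then (0:k) else 1) = m := by
  rw [Finset.sum_range_reflect (fun t => if Even t then (0:k) else 1) (2*m)]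
  exact sum_parity_one m
-- product identity
lemma prodQ (p : k) (i : ℕ) (hi : 1 ≤ i) :
    ∏ l ∈ Finset.range (i - 1), qnum p (i - l) = qfact p i := by
  obtain ⟨i', rfl⟩ : ∃ i', i = i' + 1 := ⟨i - 1, by omega⟩
  have h := Finset.prod_range_reflect (fun l => qnum p (l + 1)) (i' + 1)
  have h2 : ∀ j ∈ Finset.range (i'+1), qnum p (i' + 1 - 1 - j + 1) = qnum p (i' + 1 - j) := by
    intro j hj
    simp only [Finset.mem_range] at hj
    congr 1
    omega
  rw [Finset.prod_congr rfl h2] at h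
  rw [show qfact p (i'+1) = ∏ l ∈ Finset.range (i'+1), qnum p (l+1) from rfl, ← h,
    Finset.prod_range_succ, Nat.add_sub_cancel_left, qnum_one, mul_one, Nat.add_sub_cancel]

lemma prodQ' (p : k) (N : ℕ) : ∏ l ∈ Finset.range N, qnum p (N - l) = qfact p N := by
  have h := Finset.prod_range_reflect (fun l => qnum p (l + 1)) N
  rw [show qfact p N = ∏ l ∈ Finset.range N, qnum p (l+1) from rfl, ← h]
  apply Finset.prod_congr rfl
  intro l hl
  simp only [Finset.mem_range] at hl
  congr 1
  omega

section Words
variable (q11 q12 : k)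
  (D1 : FreeAlgebra k (Fin 2) →ₗ[k] FreeAlgebra k (Fin 2))
  (hD1x1 : D1 (FreeAlgebra.ι k 0) = 1)
  (hD1x2 : D1 (FreeAlgebra.ι k 1) = 0)
  (hD1mul : ∀ a b : FreeAlgebra k (Fin 2),
    D1 (a * b) = D1 a * b + alph q11⁻¹ q12⁻¹ a * D1 b)
  (hq11 : q11 ≠ 0) (hq12 : q12 ≠ 0) (i : ℕ)

include hD1x1 hD1x2 hD1mul hq11 hq12

lemma D1_zpow_mul (n : ℕ) (v : FreeAlgebra k (Fin 2)) :
    D1 (zz q11 q12 i ^ n * v)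
      = ((q11⁻¹ ^ i * q12⁻¹) ^ n) • (zz q11 q12 i ^ n * D1 v) :=
  D_zpow_mul _ _ D1 hD1mul _ v (D1_zz q11 q12 hq11 hq12 D1 hD1x1 hD1x2 hD1mul i) _
    (alph_zz _ _ _ _ i) n

lemma D1_LR (b e c : ℕ) :
    D1 (zz q11 q12 i ^ b * (FreeAlgebra.ι k 0 ^ e * zz q11 q12 i ^ c))
      = ((q11⁻¹ ^ i * q12⁻¹) ^ b * qnum q11⁻¹ e)
          • (zz q11 q12 i ^ b * (FreeAlgebra.ι k 0 ^ (e - 1) * zz q11 q12 i ^ c)) := by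
  rw [D1_zpow_mul q11 q12 D1 hD1x1 hD1x2 hD1mul hq11 hq12,
    D_x1pow_mul q11⁻¹ q12⁻¹ D1 hD1mul hD1x1,
    D_pow_zero q11⁻¹ q12⁻¹ D1 hD1mul _ (D1_zz q11 q12 hq11 hq12 D1 hD1x1 hD1x2 hD1mul i)]
  rw [mul_zero, smul_zero, add_zero, mul_smul_comm, smul_smul]

lemma D1_iter_partial : ∀ (r : ℕ), ∀ (e : ℕ), r ≤ e → ∀ (a c : ℕ),
    (⇑D1)^[r] (zz q11 q12 i ^ a * (FreeAlgebra.ι k 0 ^ e * zz q11 q12 i ^ c))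
      = ((q11⁻¹ ^ i * q12⁻¹) ^ (a * r) * ∏ l ∈ Finset.range r, qnum q11⁻¹ (e - l))
          • (zz q11 q12 i ^ a * (FreeAlgebra.ι k 0 ^ (e - r) * zz q11 q12 i ^ c)) := by
  intro r
  induction r with
  | zero => intro e _ a c; simp
  | succ r ih =>
    intro e hre a c
    rw [Function.iterate_succ_apply, D1_LR q11 q12 D1 hD1x1 hD1x2 hD1mul hq11 hq12,
      ← Module.End.pow_apply, map_smul, Module.End.pow_apply,
      ih (e-1) (by omega) a c, smul_smul]
    have hx : e - 1 - r = e - (r + 1) := by omega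
    rw [hx]
    congr 1
    rw [Finset.prod_range_succ' (fun l => qnum q11⁻¹ (e - l)) r]
    have hp : ∀ l ∈ Finset.range r, qnum q11⁻¹ (e - (l + 1)) = qnum q11⁻¹ (e - 1 - l) := by
      intro l hl; congr 1; omega
    rw [Finset.prod_congr rfl hp, Nat.sub_zero, Nat.mul_succ, pow_add]
    ring

lemma D1_iter_word : ∀ N : ℕ, ∀ j e : ℕ, j + e = N → ∀ a b c : ℕ,
    (⇑D1)^[N] (zz q11 q12 i ^ a * (FreeAlgebra.ι k 0 ^ j *
        (zz q11 q12 i ^ b * (FreeAlgebra.ι k 0 ^ e * zz q11 q12 i ^ c))))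
      = ((q11⁻¹ ^ i * q12⁻¹) ^ (a * N + b * e) * qfact q11⁻¹ N)
          • zz q11 q12 i ^ (a + b + c) := by
  intro N
  induction N with
  | zero =>
    intro j e hje a b c
    obtain ⟨rfl, rfl⟩ : j = 0 ∧ e = 0 := by omega
    simp only [Function.iterate_zero_apply, pow_zero, one_mul]
    rw [← pow_add, ← pow_add, show a + (b + c) = a + b + c by omega]
    simp [qfact]
  | succ N ihN =>
    intro j e hje a b c
    rw [Function.iterate_succ_apply]
    rcases j with _ | j'
    · have he : e = N + 1 := by omega
      subst he
      rw [pow_zero, one_mul, ← mul_assoc, ← pow_add,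
        D1_LR q11 q12 D1 hD1x1 hD1x2 hD1mul hq11 hq12,
        ← Module.End.pow_apply, map_smul, Module.End.pow_apply, Nat.add_sub_cancel,
        D1_iter_partial q11 q12 D1 hD1x1 hD1x2 hD1mul hq11 hq12 i N N le_rfl,
        Nat.sub_self, pow_zero, one_mul, ← pow_add, smul_smul, prodQ']
      rw [show a + b + c = a + (b + c) by omega]
      congr 1
      rw [show a * (N+1) + b * (N+1) = (a + b) * N + (a + b) by ring, pow_add, qfact_succ]
      ring
    · rw [D1_zpow_mul q11 q12 D1 hD1x1 hD1x2 hD1mul hq11 hq12,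
        D_x1pow_mul q11⁻¹ q12⁻¹ D1 hD1mul hD1x1, Nat.add_sub_cancel,
        D1_LR q11 q12 D1 hD1x1 hD1x2 hD1mul hq11 hq12]
      simp only [mul_add, smul_add, mul_smul_comm, smul_smul]
      rw [← Module.End.pow_apply, map_add, map_smul, map_smul, Module.End.pow_apply,
        Module.End.pow_apply]
      rw [ihN j' e (by omega) a b c]
      rcases e with _ | e''
      · rw [qnum_zero]
        simp only [mul_zero, zero_mul, zero_smul, smul_zero, add_zero]
        rw [smul_smul]
        congr 1
        have hj : j' + 1 = N + 1 := by omega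
        rw [qfact_succ, ← hj]
        simp only [Nat.mul_succ, Nat.mul_one, pow_add]
        ring
      · rw [Nat.add_sub_cancel, ihN (j' + 1) e'' (by omega) a b c, smul_smul, smul_smul,
          ← add_smul]
        congr 1
        have hq : qnum q11⁻¹ (N+1) = qnum q11⁻¹ (j'+1) + (q11⁻¹)^(j'+1) * qnum q11⁻¹ (e''+1) := by
          rw [← qnum_add]; congr 1; omega
        rw [qfact_succ, hq]
        simp only [Nat.mul_succ, Nat.mul_one, pow_add]
        ring

end Words

section D2Sums
variable (q11 q12 q21 q22 : k)
  (D2 : FreeAlgebra k (Fin 2) →ₗ[k] FreeAlgebra k (Fin 2))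
  (hD2x1 : D2 (FreeAlgebra.ι k 0) = 0)
  (hD2x2 : D2 (FreeAlgebra.ι k 1) = 1)
  (hD2mul : ∀ a b : FreeAlgebra k (Fin 2),
    D2 (a * b) = D2 a * b + alph q21⁻¹ q22⁻¹ a * D2 b)
  (hq21 : q21 ≠ 0) (i : ℕ)

include hD2x1 hD2x2 hD2mul hq21

lemma D2_zpow : ∀ n : ℕ,
    D2 (zz q11 q12 i ^ n)
      = ∑ t ∈ Finset.range n,
          ((q21⁻¹ ^ i * bb q11 q12 q21 i) * (q21⁻¹ ^ i * q22⁻¹) ^ t)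
            • (zz q11 q12 i ^ t * (FreeAlgebra.ι k 0 ^ i * zz q11 q12 i ^ (n - 1 - t))) := by
  intro n
  induction n with
  | zero => simpa using D_one' q21⁻¹ q22⁻¹ D2 hD2mul
  | succ n ih =>
    rw [pow_succ', hD2mul, D2_zz q11 q12 q21 q22 hq21 D2 hD2x1 hD2x2 hD2mul i,
      alph_zz, ih, Finset.sum_range_succ']
    conv_rhs => rw [add_comm]
    congr 1
    · rw [pow_zero, mul_one, pow_zero, one_mul, smul_mul_assoc]
      have h0 : n + 1 - 1 - 0 = n := by omega
      rw [h0]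
    · rw [Finset.mul_sum]
      apply Finset.sum_congr rfl
      intro t ht
      simp only [Finset.mem_range] at ht
      rw [smul_mul_assoc, mul_smul_comm, smul_smul,
        ← mul_assoc (zz q11 q12 i) (zz q11 q12 i ^ t), ← pow_succ']
      have h2 : n + 1 - 1 - (t + 1) = n - 1 - t := by omega
      rw [h2]
      congr 1
      ring

lemma D2_word (t s : ℕ) :
    D2 (zz q11 q12 i ^ t * (FreeAlgebra.ι k 0 * zz q11 q12 i ^ s))
      = (∑ r ∈ Finset.range t,
          ((q21⁻¹ ^ i * bb q11 q12 q21 i) * (q21⁻¹ ^ i * q22⁻¹) ^ r)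
            • (zz q11 q12 i ^ r * (FreeAlgebra.ι k 0 ^ i *
                (zz q11 q12 i ^ (t - 1 - r) * (FreeAlgebra.ι k 0 * zz q11 q12 i ^ s)))))
        + ∑ r ∈ Finset.range s,
            ((q21⁻¹ ^ i * q22⁻¹) ^ t * q21⁻¹ * ((q21⁻¹ ^ i * bb q11 q12 q21 i)
                * (q21⁻¹ ^ i * q22⁻¹) ^ r))
              • (zz q11 q12 i ^ t * (FreeAlgebra.ι k 0 *
                  (zz q11 q12 i ^ r * (FreeAlgebra.ι k 0 ^ i * zz q11 q12 i ^ (s - 1 - r))))) := by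
  rw [hD2mul, D2_zpow q11 q12 q21 q22 D2 hD2x1 hD2x2 hD2mul hq21 i t,
    hD2mul, hD2x1, zero_mul, zero_add, map_pow, alph_zz, alph_x1,
    D2_zpow q11 q12 q21 q22 D2 hD2x1 hD2x2 hD2mul hq21 i s]
  congr 1
  · rw [Finset.sum_mul]
    apply Finset.sum_congr rfl
    intro r hr
    simp only [smul_mul_assoc, mul_assoc]
  · rw [smul_pow]
    simp only [Finset.mul_sum, Finset.smul_sum, smul_mul_assoc, mul_smul_comm, smul_smul]
    apply Finset.sum_congr rfl
    intro r hr
    congr 1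
    ring

end D2Sums

lemma innerS1 (β mu lam Fi1 : k) (ii t : ℕ) (key : mu * lam ^ (ii+1) = -1) :
    ∑ r ∈ Finset.range t, β * mu ^ r * (lam ^ (r*(ii+1+1) + (t-1-r)*1) * Fi1)
      = β * Fi1 * lam ^ (t-1) * (if Even t then 0 else 1) := by
  have h : ∀ r ∈ Finset.range t,
      β * mu ^ r * (lam ^ (r*(ii+1+1) + (t-1-r)*1) * Fi1)
        = β * Fi1 * lam ^ (t-1) * (-1) ^ r := by
    intro r hr
    rw [Finset.mem_range] at hr
    rw [show r*(ii+1+1) + (t-1-r)*1 = (ii+1)*r + (r + (t-1-r)) by ring,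
      show r + (t-1-r) = t-1 by omega, pow_add, pow_mul, ← key, mul_pow]
    ring
  rw [Finset.sum_congr rfl h, ← Finset.mul_sum, neg_one_geom_sum]

lemma innerS2 (β mu lam q Fi1 : k) (ii t s : ℕ) (key : mu * lam ^ (ii+1) = -1) :
    ∑ r ∈ Finset.range s, mu ^ t * q * (β * mu ^ r) * (lam ^ (t*(ii+1+1) + r*(ii+1)) * Fi1)
      = mu ^ t * q * β * Fi1 * lam ^ (t*(ii+1+1)) * (if Even s then 0 else 1) := by
  have h : ∀ r ∈ Finset.range s,
      mu ^ t * q * (β * mu ^ r) * (lam ^ (t*(ii+1+1) + r*(ii+1)) * Fi1)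
        = mu ^ t * q * β * Fi1 * lam ^ (t*(ii+1+1)) * (-1) ^ r := by
    intro r hr
    rw [show t*(ii+1+1) + r*(ii+1) = (ii+1)*r + t*(ii+1+1) by ring,
      pow_add, pow_mul, ← key, mul_pow]
    ring
  rw [Finset.sum_congr rfl h, ← Finset.mul_sum, neg_one_geom_sum]


theorem D1_pow_D2_z_even_pow
    (q11 q12 q21 q22 : k)
    (hq11 : q11 ≠ 0) (hq12 : q12 ≠ 0) (hq21 : q21 ≠ 0) (hq22 : q22 ≠ 0)
    (D1 : FreeAlgebra k (Fin 2) →ₗ[k] FreeAlgebra k (Fin 2))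
    (hD1one : D1 1 = 0)
    (hD1x1 : D1 (FreeAlgebra.ι k 0) = 1)
    (hD1x2 : D1 (FreeAlgebra.ι k 1) = 0)
    (hD1mul : ∀ a b : FreeAlgebra k (Fin 2),
      D1 (a * b) = D1 a * b + alph q11⁻¹ q12⁻¹ a * D1 b)
    (D2 : FreeAlgebra k (Fin 2) →ₗ[k] FreeAlgebra k (Fin 2))
    (hD2one : D2 1 = 0)
    (hD2x1 : D2 (FreeAlgebra.ι k 0) = 0)
    (hD2x2 : D2 (FreeAlgebra.ι k 1) = 1)
    (hD2mul : ∀ a b : FreeAlgebra k (Fin 2),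
      D2 (a * b) = D2 a * b + alph q21⁻¹ q22⁻¹ a * D2 b)
    (i : ℕ) (hi : 1 ≤ i)
    (hchi : q11 ^ (i ^ 2) * q12 ^ i * q21 ^ i * q22 = -1) :
    ∀ m : ℕ, 1 ≤ m →
      (⇑D1)^[i + 1] (D2 ((⇑D1)^[i - 1] (D2 (zz q11 q12 i ^ (2 * m)))))
        = ((m : k) * cc q11 q12 q21 i * cc q11 q12 q21 (i + 1))
            • zz q11 q12 i ^ (2 * (m - 1)) := by
  intro m hm
  -- abbreviations (as plain terms)
  have hlamne : (q11⁻¹ ^ i * q12⁻¹) ≠ 0 :=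
    mul_ne_zero (pow_ne_zero _ (inv_ne_zero hq11)) (inv_ne_zero hq12)
  have key : (q21⁻¹ ^ i * q22⁻¹) * (q11⁻¹ ^ i * q12⁻¹) ^ i = -1 := by
    have h : (q11 ^ (i^2) * q12 ^ i * q21 ^ i * q22)⁻¹ = -1 := by rw [hchi]; norm_num
    rw [← h, mul_pow, ← pow_mul, show i^2 = i*i by ring, mul_inv, mul_inv, mul_inv,
      ← inv_pow, ← inv_pow, ← inv_pow]
    ring
  -- Step B
  have hB : (⇑D1)^[i-1] (D2 (zz q11 q12 i ^ (2*m)))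
      = ∑ t ∈ Finset.range (2*m),
          ((q21⁻¹ ^ i * bb q11 q12 q21 i) * (q21⁻¹ ^ i * q22⁻¹) ^ t
              * ((q11⁻¹ ^ i * q12⁻¹) ^ (t*(i-1)) * qfact q11⁻¹ i))
            • (zz q11 q12 i ^ t * (FreeAlgebra.ι k 0 * zz q11 q12 i ^ (2*m-1-t))) := by
    rw [D2_zpow q11 q12 q21 q22 D2 hD2x1 hD2x2 hD2mul hq21 i (2*m),
      ← Module.End.pow_apply, map_sum]
    apply Finset.sum_congr rfl
    intro t ht
    rw [map_smul, Module.End.pow_apply,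
      D1_iter_partial q11 q12 D1 hD1x1 hD1x2 hD1mul hq11 hq12 i (i-1) i (by omega) t (2*m-1-t),
      prodQ q11⁻¹ i hi, show i - (i-1) = 1 by omega, pow_one, smul_smul]
  -- per-t evaluation
  have hE : ∀ t ∈ Finset.range (2*m),
      (⇑D1)^[i+1] (D2 (zz q11 q12 i ^ t * (FreeAlgebra.ι k 0 * zz q11 q12 i ^ (2*m-1-t))))
        = ((∑ r ∈ Finset.range t,
              (q21⁻¹ ^ i * bb q11 q12 q21 i) * (q21⁻¹ ^ i * q22⁻¹) ^ r
                * ((q11⁻¹ ^ i * q12⁻¹) ^ (r*(i+1) + (t-1-r)*1) * qfact q11⁻¹ (i+1)))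
            + ∑ r ∈ Finset.range (2*m-1-t),
                (q21⁻¹ ^ i * q22⁻¹) ^ t * q21⁻¹ * ((q21⁻¹ ^ i * bb q11 q12 q21 i)
                    * (q21⁻¹ ^ i * q22⁻¹) ^ r)
                  * ((q11⁻¹ ^ i * q12⁻¹) ^ (t*(i+1) + r*i) * qfact q11⁻¹ (i+1)))
          • zz q11 q12 i ^ (2*(m-1)) := by
    intro t ht
    rw [Finset.mem_range] at ht
    rw [D2_word q11 q12 q21 q22 D2 hD2x1 hD2x2 hD2mul hq21 i t (2*m-1-t),
      ← Module.End.pow_apply, map_add, map_sum, map_sum, add_smul, Finset.sum_smul,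
      Finset.sum_smul]
    congr 1
    · apply Finset.sum_congr rfl
      intro r hr
      rw [Finset.mem_range] at hr
      rw [map_smul, Module.End.pow_apply,
        show FreeAlgebra.ι k 0 * zz q11 q12 i ^ (2*m-1-t)
          = FreeAlgebra.ι k 0 ^ 1 * zz q11 q12 i ^ (2*m-1-t) by rw [pow_one],
        D1_iter_word q11 q12 D1 hD1x1 hD1x2 hD1mul hq11 hq12 i (i+1) i 1 rfl r (t-1-r)
          (2*m-1-t),
        smul_smul, show r + (t-1-r) + (2*m-1-t) = 2*(m-1) by omega]
    · apply Finset.sum_congr rfl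
      intro r hr
      rw [Finset.mem_range] at hr
      rw [map_smul, Module.End.pow_apply,
        show FreeAlgebra.ι k 0 * (zz q11 q12 i ^ r * (FreeAlgebra.ι k 0 ^ i
              * zz q11 q12 i ^ (2*m-1-t-1-r)))
          = FreeAlgebra.ι k 0 ^ 1 * (zz q11 q12 i ^ r * (FreeAlgebra.ι k 0 ^ i
              * zz q11 q12 i ^ (2*m-1-t-1-r))) by rw [pow_one],
        D1_iter_word q11 q12 D1 hD1x1 hD1x2 hD1mul hq11 hq12 i (i+1) 1 i (by omega) t r
          (2*m-1-t-1-r),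
        smul_smul, show t + r + (2*m-1-t-1-r) = 2*(m-1) by omega]
  -- main assembly
  rw [hB, map_sum, ← Module.End.pow_apply, map_sum]
  simp only [map_smul, Module.End.pow_apply]
  rw [Finset.sum_congr rfl (fun t ht => by
    rw [hE t ht, smul_smul]), ← Finset.sum_smul]
  congr 1
  -- the scalar identity
  obtain ⟨ii, rfl⟩ : ∃ ii, i = ii + 1 := ⟨i - 1, by omega⟩
  simp only [Nat.add_sub_cancel]
  set L := q11⁻¹ ^ (ii+1) * q12⁻¹ with hL
  set M := q21⁻¹ ^ (ii+1) * q22⁻¹ with hM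
  set B := q21⁻¹ ^ (ii+1) * bb q11 q12 q21 (ii+1) with hBB
  set F1 := qfact q11⁻¹ (ii+1) with hF1
  set F2 := qfact q11⁻¹ (ii+1+1) with hF2
  trans (∑ t ∈ Finset.range (2*m),
      ((B^2*F1*F2*L⁻¹) * ((-1)^t * (if Even t then (0:k) else 1))
        + (B^2*F1*F2*q21⁻¹) * (if Even (2*m-1-t) then (0:k) else 1)))
  · apply Finset.sum_congr rfl
    intro t ht
    rw [Finset.mem_range] at ht
    rw [innerS1 B M L F2 ii t key, innerS2 B M L q21⁻¹ F2 ii t (2*m-1-t) key]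
    rcases t with _ | t'
    · norm_num
      ring
    · simp only [Nat.add_sub_cancel]
      have hml : M^(t'+1) * L^((ii+1)*(t'+1)) = (-1)^(t'+1) := by
        rw [pow_mul, ← mul_pow, key]
      have hA : M^(t'+1) * L^((t'+1)*ii) * L^t' = (-1)^(t'+1) * L⁻¹ := by
        apply mul_right_cancel₀ hlamne
        rw [mul_assoc ((-1:k)^(t'+1)) L⁻¹ L, inv_mul_cancel₀ hlamne, mul_one]
        linear_combination hml
      have hX : M^(t'+1) * L^((t'+1)*ii) * (M^(t'+1) * L^((t'+1)*(ii+1+1))) = 1 := by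
        have h2 : M^(t'+1) * L^((t'+1)*ii) * (M^(t'+1) * L^((t'+1)*(ii+1+1)))
            = (M^(t'+1) * L^((ii+1)*(t'+1)))^2 := by ring
        rw [h2, hml, ← pow_mul, mul_comm (t'+1) 2, pow_mul]
        norm_num
      linear_combination (B^2*F1*F2*(if Even (t'+1) then (0:k) else 1)) * hA
        + (B^2*F1*F2*q21⁻¹*(if Even (2*m-1-(t'+1)) then (0:k) else 1)) * hX
  · rw [Finset.sum_add_distrib, ← Finset.mul_sum, ← Finset.mul_sum, sum_parity_neg,
      sum_parity_refl]
    rw [hL, hBB, hF1, hF2]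
    simp only [cc, bb_succ]
    field_simp
    have hv : (1 / q11 * q11) ^ (ii + 1) = 1 := by rw [one_div, inv_mul_cancel₀ hq11, one_pow]
    linear_combination (bb q11 q12 q21 ii ^ 2 * (1 - q21 * q11 ^ ii * q12) ^ 2
        * qfact (1 / q11) (ii + 1) * qfact (1 / q11) (ii + 1 + 1) * (m : k) * (1 / q21) ^ (ii + 1)
        * (-((1 / q11) ^ (ii + 1) - q21 * q12))) * mul_one_div_cancel hq21
      + (bb q11 q12 q21 ii ^ 2 * (1 - q21 * q11 ^ ii * q12) ^ 2
        * qfact (1 / q11) (ii + 1) * qfact (1 / q11) (ii + 1 + 1) * (m : k) * (1 / q21) ^ (ii + 1)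
        * q21 * q12 * (q21 * (1 / q21))) * hv
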